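/- Let p be a prime and M a module over S₂ = ℤ[s,t]/((1 − s)(1 − t), N(s) + N(t) − p). Then im N(s^M) ⊆ im(1 − t^M) ⊆ ker(1 − s^M) ⊆ ker N(t^M), and symmetrically im N(t^M) ⊆ im(1 − s^M) ⊆ ker(1 − t^M) ⊆ ker N(s^M). -/

import Mathlib

open Finset

private lemma chain_aux {M : Type*} [AddCommGroup M] (p : ℕ) (u v : AddMonoid.End M)
    (huv : ((1 : AddMonoid.End M) - u) * ((1 : AddMonoid.End M) - v) = 0)
    (hN : (∑ j ∈ Finset.range p, u ^ j) + (∑ j ∈ Finset.range p, v ^ j) =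
      (p : AddMonoid.End M)) :
    AddMonoidHom.range (∑ j ∈ Finset.range p, u ^ j) ≤
        AddMonoidHom.range ((1 : AddMonoid.End M) - v) ∧
      AddMonoidHom.range ((1 : AddMonoid.End M) - v) ≤
        AddMonoidHom.ker ((1 : AddMonoid.End M) - u) ∧
      AddMonoidHom.ker ((1 : AddMonoid.End M) - u) ≤
        AddMonoidHom.ker (∑ j ∈ Finset.range p, v ^ j) := by
  have key : (∑ j ∈ Finset.range p, u ^ j) =
      ((1 : AddMonoid.End M) - v) * ∑ j ∈ Finset.range p, ∑ i ∈ Finset.range j, v ^ i := by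
    have h1 : ∀ j, ((1 : AddMonoid.End M) - v) * ∑ i ∈ Finset.range j, v ^ i
        = 1 - v ^ j := by
      intro j
      have := mul_geom_sum v j
      have : (-((v : AddMonoid.End M) - 1)) * ∑ i ∈ Finset.range j, v ^ i
          = -(v ^ j - 1) := by rw [neg_mul, this]
      simpa [neg_sub] using this
    rw [Finset.mul_sum]
    simp only [h1]
    have h2 : (∑ j ∈ Finset.range p, ((1 : AddMonoid.End M) - v ^ j))
        = (p : AddMonoid.End M) - ∑ j ∈ Finset.range p, v ^ j := by
      rw [Finset.sum_sub_distrib, Finset.sum_const, Finset.card_range]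
      simp [nsmul_eq_mul]
    rw [h2, ← hN]
    abel
  refine ⟨?_, ?_, ?_⟩
  · rintro x ⟨y, rfl⟩
    exact ⟨(∑ j ∈ Finset.range p, ∑ i ∈ Finset.range j, v ^ i) y, by exact (congrArg (fun f : AddMonoid.End M => f y) key).symm⟩
  · rintro x ⟨y, rfl⟩
    show ((1 - u) * (1 - v)) y = 0
    rw [huv]; rfl
  · intro x hx
    have hx' : u x = x := by
      have : ((1 : AddMonoid.End M) - u) x = 0 := hx
      have := sub_eq_zero.mp (show x - u x = 0 from this)
      exact this.symm
    have hpow : ∀ j, (u ^ j) x = x := by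
      intro j
      induction j with
      | zero => rfl
      | succ n ih =>
        have h : (u ^ (n + 1)) x = (u ^ n) (u x) := rfl
        rw [h, hx', ih]
    have hs : (∑ j ∈ Finset.range p, u ^ j) x = p • x := by
      rw [show (∑ j ∈ Finset.range p, u ^ j) x = ∑ j ∈ Finset.range p, (u ^ j) x from
        AddMonoidHom.finset_sum_apply _ _ _]
      simp [hpow]
    have hpx : ((p : AddMonoid.End M)) x = p • x := by
      simp [AddMonoid.End.natCast_apply]
    have : (∑ j ∈ Finset.range p, u ^ j) x + (∑ j ∈ Finset.range p, v ^ j) x = p • x := by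
      exact (congrArg (fun f : AddMonoid.End M => f x) hN).trans hpx
    show (∑ j ∈ Finset.range p, v ^ j) x = 0
    rw [hs] at this
    exact add_eq_left.mp this

theorem stmt12 (p : ℕ) (hp : p.Prime) {M : Type*} [AddCommGroup M]
    (s t : AddMonoid.End M) (hcomm : s * t = t * s)
    (hst : ((1 : AddMonoid.End M) - s) * ((1 : AddMonoid.End M) - t) = 0)
    (hN : (∑ j ∈ Finset.range p, s ^ j) + (∑ j ∈ Finset.range p, t ^ j) =
      (p : AddMonoid.End M)) :
    (AddMonoidHom.range (∑ j ∈ Finset.range p, s ^ j) ≤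
        AddMonoidHom.range ((1 : AddMonoid.End M) - t) ∧
      AddMonoidHom.range ((1 : AddMonoid.End M) - t) ≤
        AddMonoidHom.ker ((1 : AddMonoid.End M) - s) ∧
      AddMonoidHom.ker ((1 : AddMonoid.End M) - s) ≤
        AddMonoidHom.ker (∑ j ∈ Finset.range p, t ^ j)) ∧
    (AddMonoidHom.range (∑ j ∈ Finset.range p, t ^ j) ≤
        AddMonoidHom.range ((1 : AddMonoid.End M) - s) ∧
      AddMonoidHom.range ((1 : AddMonoid.End M) - s) ≤
        AddMonoidHom.ker ((1 : AddMonoid.End M) - t) ∧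
      AddMonoidHom.ker ((1 : AddMonoid.End M) - t) ≤
        AddMonoidHom.ker (∑ j ∈ Finset.range p, s ^ j)) := by
  have hts : ((1 : AddMonoid.End M) - t) * ((1 : AddMonoid.End M) - s) = 0 := by
    have : ((1 : AddMonoid.End M) - t) * ((1 : AddMonoid.End M) - s)
        = ((1 : AddMonoid.End M) - s) * ((1 : AddMonoid.End M) - t) := by
      simp only [mul_sub, sub_mul, mul_one, one_mul]
      rw [hcomm]; abel
    rw [this, hst]
  exact ⟨chain_aux p s t hst hN, chain_aux p t s hts (by rw [add_comm]; exact hN)⟩
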